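/- Let B be a Boolean algebra and G a subgroup of Aut(B) satisfying (MVP1). Define a ∼_G b iff there is f ∈ G with f(a) = b. Then ∼_G is an effect algebra congruence on B (viewed as an effect algebra where a ⊕ b is the join a ∨ b defined only when a ∧ b = 0). -/
import Mathlib


/-- An effect algebra: a partial algebra `(α; ⊕, 0, 1)`.  The partial operation is
encoded by a total function `add` together with a definedness predicate `D`. -/
structure EffectAlgebra (α : Type*) where
  D : α → α → Prop
  add : α → α → α
  zero : α
  one : α
  comm_def : ∀ a b, D a b → D b a
  comm : ∀ a b, D a b → add a b = add b a
  assoc_def₁ : ∀ a b c, D a b → D (add a b) c → D b c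
  assoc_def₂ : ∀ a b c, D a b → D (add a b) c → D a (add b c)
  assoc : ∀ a b c, D a b → D (add a b) c → add (add a b) c = add a (add b c)
  orth_exists : ∀ a, ∃! b, D a b ∧ add a b = one
  add_one : ∀ a, D a one → a = zero

namespace EffectAlgebra

variable {α : Type*}
open Classical

/-- The induced order: `a ≤ b` iff `∃ c, a ⊕ c = b`. -/
def le (E : EffectAlgebra α) (a b : α) : Prop := ∃ c, E.D a c ∧ E.add a c = b

/-- The orthosupplement `a'`. -/
noncomputable def orth (E : EffectAlgebra α) (a : α) : α := (E.orth_exists a).choose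

/-- Partial difference: `sub b a = b ⊖ a`, intended for `a ≤ b`. -/
noncomputable def sub (E : EffectAlgebra α) (b a : α) : α :=
  if h : ∃ c, E.D a c ∧ E.add a c = b then h.choose else E.zero

end EffectAlgebra

section BGpair

variable {α : Type*} [BooleanAlgebra α]

/-- `L(a,b) = {a ∧ f(b) : f ∈ G}`. -/
def Lset (G : Subgroup (α ≃o α)) (a b : α) : Set α := {x | ∃ f ∈ G, x = a ⊓ f b}

/-- `L⁺(a,b) = {g(a) ∧ f(b) : f, g ∈ G}`. -/
def Lplus (G : Subgroup (α ≃o α)) (a b : α) : Set α :=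
  {x | ∃ f ∈ G, ∃ g ∈ G, x = g a ⊓ f b}

/-- Condition (MVP1). -/
def MVP1 (G : Subgroup (α ≃o α)) : Prop :=
  ∀ (a b : α) (f : α ≃o α), f ∈ G → a ≤ b → f a ≤ b →
    ∃ h ∈ G, h a = f a ∧ h b = b

/-- Condition (MVP2): every element of `L(a,b)` lies below a maximal element of `L(a,b)`. -/
def MVP2 (G : Subgroup (α ≃o α)) : Prop :=
  ∀ (a b x : α), x ∈ Lset G a b →
    ∃ m ∈ Lset G a b, x ≤ m ∧ ∀ y ∈ Lset G a b, m ≤ y → y = m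

/-- The equivalence `a ∼_G b` iff `f(a) = b` for some `f ∈ G`. -/
def rG (G : Subgroup (α ≃o α)) (a b : α) : Prop := ∃ f ∈ G, f a = b

end BGpair

/-- if `(B,G)` satisfies (MVP1), then `∼_G` is an effect algebra congruence
on the Boolean algebra `B` viewed as an effect algebra (`a ⊕ b = a ⊔ b` defined iff
`a ⊓ b = ⊥`): it is an equivalence relation satisfying (C2), (C5) and (C6). -/
theorem stmt10 {α : Type*} [BooleanAlgebra α] (G : Subgroup (α ≃o α))
    (h1 : MVP1 G) :
    Equivalence (rG G) ∧
    -- (C2)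
    (∀ a₁ a₂ b₁ b₂ : α, rG G a₁ a₂ → rG G b₁ b₂ → a₁ ⊓ b₁ = ⊥ → a₂ ⊓ b₂ = ⊥ →
      rG G (a₁ ⊔ b₁) (a₂ ⊔ b₂)) ∧
    -- (C5)
    (∀ a b c : α, b ⊓ c = ⊥ → rG G a (b ⊔ c) →
      ∃ b₁ c₁ : α, rG G b₁ b ∧ rG G c₁ c ∧ b₁ ⊓ c₁ = ⊥ ∧ a = b₁ ⊔ c₁) ∧
    -- (C6)
    (∀ a b : α, rG G a b → rG G aᶜ bᶜ) := by
  
  -- auxiliary facts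
  have mapc : ∀ (f : α ≃o α) (a : α), f aᶜ = (f a)ᶜ := by
    intro f a
    have h : IsCompl (f a) (f aᶜ) := by
      constructor
      · rw [disjoint_iff, ← f.map_inf, inf_compl_eq_bot, f.map_bot]
      · rw [codisjoint_iff, ← f.map_sup, sup_compl_eq_top, f.map_top]
    exact h.compl_eq.symm
  have equiv : Equivalence (rG G) := by
    constructor
    · exact fun a => ⟨1, G.one_mem, rfl⟩
    · rintro a b ⟨f, hf, rfl⟩
      exact ⟨f⁻¹, G.inv_mem hf, f.symm_apply_apply a⟩
    · rintro a b c ⟨f, hf, rfl⟩ ⟨g, hg, rfl⟩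
      exact ⟨g * f, G.mul_mem hg hf, rfl⟩
  -- key claim from (MVP1): x ∼ y, x ⊓ c = ⊥, y ⊓ c = ⊥ ⟹ x ⊔ c ∼ y ⊔ c
  have key : ∀ x y c : α, rG G x y → x ⊓ c = ⊥ → y ⊓ c = ⊥ → rG G (x ⊔ c) (y ⊔ c) := by
    rintro x y c ⟨φ, hφ, rfl⟩ hx hy
    have hx' : x ≤ cᶜ := le_compl_iff_disjoint_right.2 (disjoint_iff.2 hx)
    have hy' : φ x ≤ cᶜ := le_compl_iff_disjoint_right.2 (disjoint_iff.2 hy)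
    obtain ⟨h, hhG, hh1, hh2⟩ := h1 x cᶜ φ hφ hx' hy'
    refine ⟨h, hhG, ?_⟩
    have hc : h c = c := by
      have := hh2
      rw [← compl_compl c]
      rw [mapc h cᶜ, hh2]
    rw [h.map_sup, hh1, hc]
  refine ⟨equiv, ?_, ?_, ?_⟩
  · -- (C2)
    rintro a₁ a₂ b₁ b₂ ha ⟨g, hg, rfl⟩ hd1 hd2
    have step1 : rG G (a₁ ⊔ b₁) (g a₁ ⊔ g b₁) := ⟨g, hg, g.map_sup a₁ b₁⟩
    have hd3 : g a₁ ⊓ g b₁ = ⊥ := by rw [← g.map_inf, hd1, g.map_bot]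
    have hsim : rG G (g a₁) a₂ := equiv.trans (equiv.symm ⟨g, hg, rfl⟩) ha
    exact equiv.trans step1 (key (g a₁) a₂ (g b₁) hsim hd3 hd2)
  · -- (C5)
    rintro a b c hbc ⟨f, hf, hfa⟩
    refine ⟨f.symm b, f.symm c, ⟨f, hf, f.apply_symm_apply b⟩,
      ⟨f, hf, f.apply_symm_apply c⟩, ?_, ?_⟩
    · rw [← f.symm.map_inf, hbc]; exact f.symm.map_bot
    · rw [← f.symm.map_sup, ← hfa, f.symm_apply_apply]
  · -- (C6)
    rintro a b ⟨f, hf, rfl⟩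
    exact ⟨f, hf, mapc f a⟩
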